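/- arXiv:2605.01063 — 2 statements merged into one kernel-verified Lean document; each statement's English description precedes it below -/
import Mathlib

section
/- Let E be a real inner product space, C ≥ 1, and let μ₁, …, μ_C ∈ E with global mean μ_G = (1/C) ∑_{c=1}^C μ_c. Assume the class means are equinorm (‖μ_i‖ = ‖μ_j‖ for all i, j) and the centered class means are equinorm (‖μ_i − μ_G‖ = ‖μ_j − μ_G‖ for all i, j). Then for every c, the inner product ⟨μ_G, μ_c − μ_G⟩ = 0; in particular, whenever μ_G ≠ 0 and μ_c ≠ μ_G, the cosine similarity between μ_G and μ_c − μ_G is 0. -/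
/-- Theorem 1(2): if the class means are equinorm and the centered class means are
equinorm, then the global mean `μ_G` is orthogonal to every centered class mean
`μ_c - μ_G`; in particular the cosine similarity between `μ_G` and `μ_c - μ_G`
vanishes whenever both are nonzero. -/
theorem global_mean_orthogonal_centered {E : Type*} [NormedAddCommGroup E]
    [InnerProductSpace ℝ E] (C : ℕ) (hC : 1 ≤ C) (μ : Fin C → E)
    (μG : E) (hμG : μG = (C : ℝ)⁻¹ • ∑ c, μ c)
    (heq : ∀ i j, ‖μ i‖ = ‖μ j‖)
    (heqc : ∀ i j, ‖μ i - μG‖ = ‖μ j - μG‖) :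
    ∀ c, (inner ℝ μG (μ c - μG) : ℝ) = 0 ∧
      (μG ≠ 0 → μ c ≠ μG →
        (inner ℝ μG (μ c - μG) : ℝ) / (‖μG‖ * ‖μ c - μG‖) = 0) := by
  have hCne : (C : ℝ) ≠ 0 := by positivity
  -- all inner products ⟨μ i, μG⟩ are equal
  have hinner : ∀ i j, (inner ℝ (μ i) μG : ℝ) = inner ℝ (μ j) μG := by
    intro i j
    have h1 : ‖μ i - μG‖ ^ 2 = ‖μ j - μG‖ ^ 2 := by rw [heqc i j]
    rw [norm_sub_sq_real, norm_sub_sq_real, heq i j] at h1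
    linarith
  -- sum of inner products equals C * ‖μG‖²
  have hsum : ∑ i, (inner ℝ (μ i) μG : ℝ) = (C : ℝ) * ‖μG‖ ^ 2 := by
    rw [← sum_inner]
    have : (∑ c, μ c) = (C : ℝ) • μG := by
      rw [hμG, smul_smul, mul_inv_cancel₀ hCne, one_smul]
    rw [this, real_inner_smul_left, real_inner_self_eq_norm_sq]
  intro c
  have hconst : ∑ i, (inner ℝ (μ i) μG : ℝ) = (C : ℝ) * inner ℝ (μ c) μG := by
    rw [Finset.sum_congr rfl (fun i _ => hinner i c), Finset.sum_const,
      Finset.card_univ, Fintype.card_fin, nsmul_eq_mul]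
  have hc : (inner ℝ (μ c) μG : ℝ) = ‖μG‖ ^ 2 := by
    have := hconst.symm.trans hsum
    field_simp at this
    linarith
  have key : (inner ℝ μG (μ c - μG) : ℝ) = 0 := by
    have h2 : (inner ℝ μG (μ c) : ℝ) = ‖μG‖ ^ 2 := by rw [real_inner_comm]; exact hc
    rw [inner_sub_right, h2, real_inner_self_eq_norm_sq]
    ring
  exact ⟨key, fun _ _ => by rw [key]; simp⟩
end

section
/- Let p ≥ 1, fix a nonzero vector μ ∈ ℝ^p and real constants α and r_id. Define s(h) = ⟨h, μ⟩ / (‖h‖·‖μ‖) for h ≠ 0, and L(h) = (‖h‖ − s(h)²·α·r_id)². Then L is differentiable at every h ≠ 0, and writing r = ‖h‖, ĥ = h/r, s = s(h), and t = s²·α·r_id, its gradient is ∇L(h) = 2(r − t)·ĥ − (4·s·(r − t)·α·r_id / (r·‖μ‖)) · (μ − s·‖μ‖·ĥ). -/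
/-- Full gradient decomposition of the GEODE angle-adaptive norm loss
`L(h) = (‖h‖ - s(h)²·α·r_id)²` with `s(h) = ⟨h, μ⟩/(‖h‖·‖μ‖)` for a fixed nonzero
class mean `μ`: `L` is differentiable at every `h ≠ 0` and, writing `r = ‖h‖`,
`ĥ = r⁻¹ • h`, `s = s(h)`, `t = s²·α·r_id`,
`∇L(h) = 2(r - t)·ĥ - (4·s·(r - t)·α·r_id/(r·‖μ‖)) · (μ - s·‖μ‖·ĥ)`. -/
theorem gradient_adaptive_norm_loss (p : ℕ) (hp : 1 ≤ p)
    (μ h : EuclideanSpace ℝ (Fin p)) (hμ : μ ≠ 0) (hh : h ≠ 0)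
    (α r_id r s t : ℝ) (hr : r = ‖h‖)
    (hs : s = (inner ℝ h μ : ℝ) / (‖h‖ * ‖μ‖)) (ht : t = s ^ 2 * α * r_id) :
    DifferentiableAt ℝ
      (fun x : EuclideanSpace ℝ (Fin p) =>
        (‖x‖ - ((inner ℝ x μ : ℝ) / (‖x‖ * ‖μ‖)) ^ 2 * α * r_id) ^ 2) h ∧
    gradient
      (fun x : EuclideanSpace ℝ (Fin p) =>
        (‖x‖ - ((inner ℝ x μ : ℝ) / (‖x‖ * ‖μ‖)) ^ 2 * α * r_id) ^ 2) h =
      (2 * (r - t)) • (r⁻¹ • h) -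
        (4 * s * (r - t) * α * r_id / (r * ‖μ‖)) • (μ - (s * ‖μ‖) • (r⁻¹ • h)) := by
  subst ht hs hr
  have hn : ‖h‖ ≠ 0 := norm_ne_zero_iff.mpr hh
  have hc : ‖μ‖ ≠ 0 := norm_ne_zero_iff.mpr hμ
  -- rewrite the loss in multiplication-only form
  have hfun : (fun x : EuclideanSpace ℝ (Fin p) => (‖x‖ - ((inner ℝ x μ : ℝ) / (‖x‖ * ‖μ‖)) ^ 2 * α * r_id) ^ 2)
      = fun x : EuclideanSpace ℝ (Fin p) => (‖x‖ - (inner ℝ x μ : ℝ) * (inner ℝ x μ : ℝ) *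
          (‖x‖ * ‖x‖ * (‖μ‖ * ‖μ‖))⁻¹ * α * r_id) *
        (‖x‖ - (inner ℝ x μ : ℝ) * (inner ℝ x μ : ℝ) *
          (‖x‖ * ‖x‖ * (‖μ‖ * ‖μ‖))⁻¹ * α * r_id) := by
    funext x
    rw [div_pow, show (‖x‖ * ‖μ‖) ^ 2 = ‖x‖ * ‖x‖ * (‖μ‖ * ‖μ‖) by ring,
      show ((inner ℝ x μ : ℝ)) ^ 2 = (inner ℝ x μ : ℝ) * (inner ℝ x μ : ℝ) by ring,
      div_eq_mul_inv, sq]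
  -- derivative of the norm
  have N : HasFDerivAt (fun x : EuclideanSpace ℝ (Fin p) => ‖x‖) ((1 / (2 * ‖h‖)) • (2 • (innerSL ℝ h))) h := by
    have NS := (hasStrictFDerivAt_norm_sq h).hasFDerivAt
    have := NS.sqrt (by positivity)
    simpa only [Real.sqrt_sq (norm_nonneg _)] using this
  -- derivative of the inner product
  have I : HasFDerivAt (fun x : EuclideanSpace ℝ (Fin p) => (inner ℝ x μ : ℝ))
      ((fderivInnerCLM ℝ (h, μ)).comp ((ContinuousLinearMap.id ℝ (EuclideanSpace ℝ (Fin p))).prod 0)) h := by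
    exact (hasFDerivAt_id h).inner ℝ (hasFDerivAt_const μ h)
  have hden : ‖h‖ * ‖h‖ * (‖μ‖ * ‖μ‖) ≠ 0 := by positivity
  have INV := (hasDerivAt_inv hden).comp_hasFDerivAt h ((N.mul N).mul_const (‖μ‖ * ‖μ‖))
  have M := (((I.mul I).mul INV).mul_const α).mul_const r_id
  have S := N.sub M
  have L := S.mul S
  simp only [Function.comp_def] at L
  rw [hfun]
  refine ⟨L.differentiableAt, ?_⟩
  have hg := (hasFDerivAt_iff_hasGradientAt.mp L).gradient
  erw [hg]
  have key : ∀ (D : EuclideanSpace ℝ (Fin p) →L[ℝ] ℝ) (G : EuclideanSpace ℝ (Fin p)),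
      D = InnerProductSpace.toDual ℝ (EuclideanSpace ℝ (Fin p)) G →
      (InnerProductSpace.toDual ℝ (EuclideanSpace ℝ (Fin p))).symm D = G := by
    intro D G hDG
    rw [hDG, LinearIsometryEquiv.symm_apply_apply]
  apply key
  ext v
  simp only [ContinuousLinearMap.smul_apply, ContinuousLinearMap.sub_apply,
    ContinuousLinearMap.add_apply, ContinuousLinearMap.comp_apply,
    ContinuousLinearMap.prod_apply, ContinuousLinearMap.coe_id', id_eq,
    ContinuousLinearMap.zero_apply, fderivInnerCLM_apply, innerSL_apply_apply,
    ContinuousLinearMap.smulRight_apply, InnerProductSpace.toDual_apply_apply, smul_eq_mul,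
    Function.comp_apply, ContinuousLinearMap.coe_smul', Pi.smul_apply,
    inner_zero_right, inner_zero_left, add_zero, zero_add,
    inner_sub_left, inner_smul_left, real_inner_smul_left, inner_sub_right,
    RCLike.inner_apply, conj_trivial]
  simp only [nsmul_eq_mul, real_inner_comm v μ, Pi.mul_apply, Pi.sub_apply, Pi.pow_apply]
  field_simp
  ring
end
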